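/- Let {f_i}_{i∈I} be a Parseval frame for a Hilbert space H. Then for every subset J ⊆ I and every f ∈ H: ∑_{i∈J} |⟨f, f_i⟩|² + ‖∑_{i∈J^c} ⟨f, f_i⟩ f_i‖² = ∑_{i∈J^c} |⟨f, f_i⟩|² + ‖∑_{i∈J} ⟨f, f_i⟩ f_i‖², where J^c = I \ J. -/

import Mathlib

open scoped InnerProductSpace
open scoped ComplexConjugate


section Aux
variable {H : Type*} [NormedAddCommGroup H] [InnerProductSpace ℂ H] [CompleteSpace H]
  {ι : Type*}

/-- Finite Bessel-type estimate: `‖∑_{i∈s} c i • f i‖² ≤ ∑_{i∈s} ‖c i‖²`. -/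
lemma aux_finset_est (f : ι → H)
    (hP : ∀ x : H, HasSum (fun i => ‖⟪f i, x⟫_ℂ‖ ^ 2) (‖x‖ ^ 2))
    (c : ι → ℂ) (s : Finset ι) :
    ‖∑ i ∈ s, c i • f i‖ ^ 2 ≤ ∑ i ∈ s, ‖c i‖ ^ 2 := by
  obtain ⟨y, hy⟩ : ∃ y, y = ∑ i ∈ s, c i • f i := ⟨_, rfl⟩
  rw [← hy]
  have hinner : ⟪y, y⟫_ℂ = ∑ i ∈ s, conj (c i) * ⟪f i, y⟫_ℂ := by
    rw [hy, sum_inner]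
    exact Finset.sum_congr rfl fun i _ => by rw [inner_smul_left]
  have hbessel : ∑ i ∈ s, ‖⟪f i, y⟫_ℂ‖ ^ 2 ≤ ‖y‖ ^ 2 := by
    exact (hP y).tsum_eq ▸ Summable.sum_le_tsum s (fun i _ => by positivity) (hP y).summable
  have h1 : ‖⟪y, y⟫_ℂ‖ = ‖y‖ ^ 2 := by
    rw [inner_self_eq_norm_sq_to_K]
    rw [norm_pow]
    norm_num
  have h2 : ‖⟪y, y⟫_ℂ‖ ≤ ∑ i ∈ s, ‖c i‖ * ‖⟪f i, y⟫_ℂ‖ := by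
    rw [hinner]
    refine (norm_sum_le _ _).trans ?_
    refine Finset.sum_le_sum fun i _ => ?_
    rw [norm_mul, RCLike.norm_conj]
  have hCS : (∑ i ∈ s, ‖c i‖ * ‖⟪f i, y⟫_ℂ‖) ^ 2 ≤
      (∑ i ∈ s, ‖c i‖ ^ 2) * ∑ i ∈ s, ‖⟪f i, y⟫_ℂ‖ ^ 2 :=
    Finset.sum_mul_sq_le_sq_mul_sq s _ _
  -- so (‖y‖²)² ≤ (∑ ‖c‖²) * ‖y‖²
  have key : (‖y‖ ^ 2) ^ 2 ≤ (∑ i ∈ s, ‖c i‖ ^ 2) * ‖y‖ ^ 2 := by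
    calc (‖y‖ ^ 2) ^ 2 = ‖⟪y, y⟫_ℂ‖ ^ 2 := by rw [h1]
    _ ≤ (∑ i ∈ s, ‖c i‖ * ‖⟪f i, y⟫_ℂ‖) ^ 2 := by
        apply pow_le_pow_left₀ (norm_nonneg _) h2
    _ ≤ (∑ i ∈ s, ‖c i‖ ^ 2) * ∑ i ∈ s, ‖⟪f i, y⟫_ℂ‖ ^ 2 := hCS
    _ ≤ (∑ i ∈ s, ‖c i‖ ^ 2) * ‖y‖ ^ 2 := by
        apply mul_le_mul_of_nonneg_left hbessel (by positivity)
  nlinarith [key, sq_nonneg ‖y‖, Finset.sum_nonneg (fun i (_ : i ∈ s) => sq_nonneg ‖c i‖)]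

end Aux

section Aux2
variable {H : Type*} [NormedAddCommGroup H] [InnerProductSpace ℂ H] [CompleteSpace H]
  {ι : Type*}

lemma aux_summable (f : ι → H)
    (hP : ∀ x : H, HasSum (fun i => ‖⟪f i, x⟫_ℂ‖ ^ 2) (‖x‖ ^ 2)) (x : H) :
    Summable (fun i => ⟪f i, x⟫_ℂ • f i) := by
  set c : ι → ℂ := fun i => ⟪f i, x⟫_ℂ with hc
  rw [summable_iff_vanishing_norm]
  intro ε hε
  have hc2 : Summable fun i => ‖c i‖ ^ 2 := (hP x).summable
  obtain ⟨s, hs⟩ := summable_iff_vanishing_norm.1 hc2 (ε ^ 2) (by positivity)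
  refine ⟨s, fun t ht => ?_⟩
  have h1 : ‖∑ i ∈ t, c i • f i‖ ^ 2 ≤ ∑ i ∈ t, ‖c i‖ ^ 2 := aux_finset_est f hP c t
  have h2 : ∑ i ∈ t, ‖c i‖ ^ 2 < ε ^ 2 := by
    have := hs t ht
    rwa [Real.norm_of_nonneg (by positivity)] at this
  have := lt_of_le_of_lt h1 h2
  nlinarith [norm_nonneg (∑ i ∈ t, c i • f i)]

lemma aux_inner_tsum (f : ι → H)
    (hP : ∀ x : H, HasSum (fun i => ‖⟪f i, x⟫_ℂ‖ ^ 2) (‖x‖ ^ 2)) (x : H) (J : Set ι) :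
    ⟪x, ∑' i : J, ⟪f i, x⟫_ℂ • f i⟫_ℂ = ((∑' i : J, ‖⟪f i, x⟫_ℂ‖ ^ 2 : ℝ) : ℂ) := by
  set c : ι → ℂ := fun i => ⟪f i, x⟫_ℂ with hc
  have hsum : HasSum (fun i : J => c i • f i) (∑' i : J, c i • f i) :=
    ((aux_summable f hP x).subtype J).hasSum
  have h1 : HasSum (fun i : J => ⟪x, c i • f i⟫_ℂ) ⟪x, ∑' i : J, c i • f i⟫_ℂ :=
    hsum.mapL (innerSL ℂ x)
  have h2 : ∀ i : J, ⟪x, c i • f i⟫_ℂ = ((‖c i‖ ^ 2 : ℝ) : ℂ) := by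
    intro i
    rw [inner_smul_right]
    have : ⟪x, f i⟫_ℂ = conj (c i) := by rw [hc, inner_conj_symm]
    rw [this, Complex.mul_conj]
    norm_cast
    simp [Complex.normSq_eq_norm_sq]
  have h3 : HasSum (fun i : J => ((‖c i‖ ^ 2 : ℝ) : ℂ)) ⟪x, ∑' i : J, c i • f i⟫_ℂ := by
    simpa [h2] using h1
  have h4 : HasSum (fun i : J => ‖c i‖ ^ 2) (∑' i : J, ‖c i‖ ^ 2) :=
    ((hP x).summable.subtype J).hasSum
  have h5 := h4.mapL (Complex.ofRealCLM)
  simpa using h5.unique h3 |>.symm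

lemma aux_reconstruct (f : ι → H)
    (hP : ∀ x : H, HasSum (fun i => ‖⟪f i, x⟫_ℂ‖ ^ 2) (‖x‖ ^ 2)) (x : H) :
    (∑' i, ⟪f i, x⟫_ℂ • f i) = x := by
  set c : ι → ℂ := fun i => ⟪f i, x⟫_ℂ with hc
  set T := ∑' i, c i • f i with hT
  have hsum : HasSum (fun i => c i • f i) T := (aux_summable f hP x).hasSum
  -- ⟪x, T⟫ = ‖x‖²
  have hxT : ⟪x, T⟫_ℂ = ((‖x‖ ^ 2 : ℝ) : ℂ) := by
    have := aux_inner_tsum f hP x Set.univ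
    rw [tsum_univ (f := fun i => c i • f i), tsum_univ (f := fun i => ‖c i‖ ^ 2)] at this
    rw [hT, this, (hP x).tsum_eq]
  -- ‖T‖ ≤ ‖x‖
  have hTle : ‖T‖ ≤ ‖x‖ := by
    have : Filter.Tendsto (fun s : Finset ι => ∑ i ∈ s, c i • f i) Filter.atTop (nhds T) := hsum
    refine le_of_tendsto (this.norm) (Filter.Eventually.of_forall fun s => ?_)
    have h1 := aux_finset_est f hP c s
    have h2 : ∑ i ∈ s, ‖c i‖ ^ 2 ≤ ‖x‖ ^ 2 :=
      (hP x).tsum_eq ▸ Summable.sum_le_tsum s (fun i _ => by positivity) (hP x).summable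
    nlinarith [norm_nonneg (∑ i ∈ s, c i • f i), norm_nonneg x]
  have hdiff : ‖x - T‖ ^ 2 ≤ 0 := by
    rw [@norm_sub_sq ℂ]
    have : RCLike.re ⟪x, T⟫_ℂ = ‖x‖ ^ 2 := by rw [hxT]; simp [← Complex.ofReal_pow]
    rw [this]
    nlinarith [norm_nonneg T, norm_nonneg x]
  have : x - T = 0 := by
    have := le_antisymm hdiff (by positivity)
    simpa [pow_eq_zero_iff] using this
  rw [← sub_eq_zero]
  rw [← neg_sub, this, neg_zero]

end Aux2


/-- For a Parseval frame `{f_i}`, any `J ⊆ I` and any `x`: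
`∑_{i∈J} |⟨x,f_i⟩|² + ‖∑_{i∈J^c} ⟨x,f_i⟩ f_i‖² = ∑_{i∈J^c} |⟨x,f_i⟩|² + ‖∑_{i∈J} ⟨x,f_i⟩ f_i‖²`. -/
theorem stmt_17 {H : Type*} [NormedAddCommGroup H] [InnerProductSpace ℂ H] [CompleteSpace H]
    {ι : Type*} (f : ι → H)
    (hP : ∀ x : H, HasSum (fun i => ‖⟪f i, x⟫_ℂ‖ ^ 2) (‖x‖ ^ 2))
    (J : Set ι) (x : H) :
    (∑' i : J, ‖⟪f i, x⟫_ℂ‖ ^ 2) + ‖∑' i : ↥Jᶜ, ⟪f i, x⟫_ℂ • (f i : H)‖ ^ 2 =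
    (∑' i : ↥Jᶜ, ‖⟪f i, x⟫_ℂ‖ ^ 2) + ‖∑' i : J, ⟪f i, x⟫_ℂ • (f i : H)‖ ^ 2 := by
  have hsum := aux_summable f hP x
  set c : ι → ℂ := fun i => ⟪f i, x⟫_ℂ with hc
  set T := ∑' i : J, c i • f i with hTdef
  set T' := ∑' i : ↥Jᶜ, c i • f i with hT'def
  have hsplit : T + T' = x := by
    rw [hTdef, hT'def, hsum.tsum_subtype_add_tsum_subtype_compl J, aux_reconstruct f hP x]
  have hT : ⟪x, T⟫_ℂ = ((∑' i : J, ‖c i‖ ^ 2 : ℝ) : ℂ) := aux_inner_tsum f hP x J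
  have hT' : ⟪x, T'⟫_ℂ = ((∑' i : ↥Jᶜ, ‖c i‖ ^ 2 : ℝ) : ℂ) := aux_inner_tsum f hP x Jᶜ
  have ha : (∑' i : J, ‖c i‖ ^ 2) = RCLike.re ⟪x, T⟫_ℂ := by rw [hT]; simp
  have hb : (∑' i : ↥Jᶜ, ‖c i‖ ^ 2) = RCLike.re ⟪x, T'⟫_ℂ := by rw [hT']; simp
  rw [ha, hb, ← hsplit, inner_add_left, inner_add_left, map_add, map_add,
    inner_self_eq_norm_sq, inner_self_eq_norm_sq, inner_re_symm T' T]
  ring
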